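/- Let k > 0, ν > 0, and c ∈ ℝ. Then for all x > 0, d/dx ( x^{ν/k} W^k_{ν,c}(x) ) = (x^{ν/k}/k) W^k_{ν−k,c}(x). -/

import Mathlib

open Real

/-- The k-gamma function, `Γ_k(x) = k^(x/k - 1) * Γ(x/k)`. -/
noncomputable def kGamma (k x : ℝ) : ℝ := k ^ (x / k - 1) * Real.Gamma (x / k)

/-- The generalized k-Bessel function `W^k_{ν,c}(x)`. -/
noncomputable def kBesselW (k ν c x : ℝ) : ℝ :=
  ∑' r : ℕ, (-c) ^ r / (kGamma k (r * k + ν + k) * (r.factorial : ℝ)) *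
    (x / 2) ^ (2 * (r : ℝ) + ν / k)

lemma kGamma_pos {k x : ℝ} (hk : 0 < k) (hx : 0 < x) : 0 < kGamma k x :=
  mul_pos (rpow_pos_of_pos hk _) (Real.Gamma_pos_of_pos (div_pos hx hk))

lemma kGamma_add_right {k x : ℝ} (hk : 0 < k) (hx : 0 < x) :
    kGamma k (x + k) = x * kGamma k x := by
  unfold kGamma
  have hk0 : k ≠ 0 := hk.ne'
  have h1 : (x + k) / k = x / k + 1 := by field_simp
  rw [h1, Real.Gamma_add_one (ne_of_gt (div_pos hx hk)),
    show x / k + 1 - 1 = (x / k - 1) + 1 by ring, Real.rpow_add hk, Real.rpow_one]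
  field_simp

noncomputable def kbA (k ν c : ℝ) (r : ℕ) : ℝ :=
  (-c) ^ r / (kGamma k ((r : ℝ) * k + ν + k) * (r.factorial : ℝ))

noncomputable def kbG (k ν c : ℝ) (r : ℕ) (y : ℝ) : ℝ :=
  kbA k ν c r / (2:ℝ) ^ (2 * (r : ℝ) + ν / k) * y ^ (2 * (r : ℝ) + ν / k + ν / k)

noncomputable def kbG' (k ν c : ℝ) (r : ℕ) (y : ℝ) : ℝ :=
  kbA k ν c r / (2:ℝ) ^ (2 * (r : ℝ) + ν / k) *
    ((2 * (r : ℝ) + ν / k + ν / k) * y ^ (2 * (r : ℝ) + ν / k + ν / k - 1))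

noncomputable def kbC (k ν x : ℝ) : ℝ :=
  max ((x / 2) ^ (ν / k + ν / k - 1)) ((x + 1) ^ (ν / k + ν / k - 1))

noncomputable def kbD (k ν c x : ℝ) (r : ℕ) : ℝ :=
  |kbA k ν c r| / (2:ℝ) ^ (2 * (r : ℝ) + ν / k) * ((x + 1) ^ (2 * (r : ℝ)) * kbC k ν x)

noncomputable def kbU (k ν c x : ℝ) (r : ℕ) : ℝ :=
  (2 * (r : ℝ) + ν / k + ν / k) * kbD k ν c x r

lemma kbArg_pos {k ν : ℝ} (hk : 0 < k) (hν : 0 < ν) (r : ℕ) : 0 < (r : ℝ) * k + ν + k := by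
  have : (0:ℝ) ≤ (r : ℝ) * k := mul_nonneg (Nat.cast_nonneg r) hk.le
  linarith

lemma kbA_succ {k ν c : ℝ} (hk : 0 < k) (hν : 0 < ν) (r : ℕ) :
    kbA k ν c (r + 1) = -c / (((r : ℝ) * k + ν + k) * ((r : ℝ) + 1)) * kbA k ν c r := by
  have hpos := kbArg_pos hk hν r
  have hG := kGamma_pos hk hpos
  have hG2 : kGamma k (((r : ℝ) * k + ν + k) + k)
      = ((r : ℝ) * k + ν + k) * kGamma k ((r : ℝ) * k + ν + k) := kGamma_add_right hk hpos
  unfold kbA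
  rw [Nat.factorial_succ]
  push_cast
  rw [show ((r : ℝ) + 1) * k + ν + k = ((r : ℝ) * k + ν + k) + k by ring, hG2]
  have hr1 : ((r : ℝ) + 1) ≠ 0 := by positivity
  have hf : ((r.factorial : ℝ)) ≠ 0 := by positivity
  field_simp
  ring

lemma abs_kbA_succ {k ν c : ℝ} (hk : 0 < k) (hν : 0 < ν) (r : ℕ) :
    |kbA k ν c (r + 1)| = |c| / (((r : ℝ) * k + ν + k) * ((r : ℝ) + 1)) * |kbA k ν c r| := by
  have hpos := kbArg_pos hk hν r
  rw [kbA_succ hk hν r, abs_mul, abs_div, abs_neg, abs_of_pos (by positivity :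
    (0:ℝ) < ((r : ℝ) * k + ν + k) * ((r : ℝ) + 1))]

lemma kbC_pos {k ν x : ℝ} (hx : 0 < x) : 0 < kbC k ν x :=
  lt_max_of_lt_left (rpow_pos_of_pos (by linarith) _)

lemma kbG_hasDerivAt {k ν c : ℝ} (r : ℕ) {y : ℝ} (hy : 0 < y) :
    HasDerivAt (kbG k ν c r) (kbG' k ν c r y) y :=
  (Real.hasDerivAt_rpow_const (x := y) (p := 2 * (r : ℝ) + ν / k + ν / k)
    (Or.inl hy.ne')).const_mul (kbA k ν c r / (2:ℝ) ^ (2 * (r : ℝ) + ν / k))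

lemma kb_eq_tsum {k ν c : ℝ} {y : ℝ} (hy : 0 < y) :
    y ^ (ν / k) * kBesselW k ν c y = ∑' r : ℕ, kbG k ν c r y := by
  unfold kBesselW
  rw [← tsum_mul_left]
  refine tsum_congr fun r => ?_
  unfold kbG kbA
  have e1 : (y / 2) ^ (2 * (r : ℝ) + ν / k) =
      y ^ (2 * (r : ℝ) + ν / k) / (2:ℝ) ^ (2 * (r : ℝ) + ν / k) :=
    Real.div_rpow hy.le (by norm_num) _
  have e2 : y ^ (2 * (r : ℝ) + ν / k + ν / k) = y ^ (ν / k) * y ^ (2 * (r : ℝ) + ν / k) := by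
    rw [← Real.rpow_add hy]; congr 1; ring
  rw [e1, e2]
  generalize y ^ (2 * (r : ℝ) + ν / k) = Q
  generalize y ^ (ν / k) = P
  generalize (2:ℝ) ^ (2 * (r : ℝ) + ν / k) = T
  ring

lemma kbG'_tsum_eq {k ν c : ℝ} (hk : 0 < k) (hν : 0 < ν) {x : ℝ} (hx : 0 < x) :
    ∑' r : ℕ, kbG' k ν c r x = x ^ (ν / k) / k * kBesselW k (ν - k) c x := by
  unfold kBesselW
  rw [← tsum_mul_left]
  refine tsum_congr fun r => ?_
  unfold kbG' kbA
  have hpos2 : 0 < (r : ℝ) * k + ν := by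
    have : (0:ℝ) ≤ (r : ℝ) * k := mul_nonneg (Nat.cast_nonneg r) hk.le
    linarith
  have hG : kGamma k ((r : ℝ) * k + ν + k) = ((r : ℝ) * k + ν) * kGamma k ((r : ℝ) * k + ν) :=
    kGamma_add_right hk hpos2
  have e0 : (r : ℝ) * k + (ν - k) + k = (r : ℝ) * k + ν := by ring
  have e0' : (ν - k) / k = ν / k - 1 := by field_simp
  rw [e0, e0']
  have e1 : (x / 2) ^ (2 * (r : ℝ) + (ν / k - 1)) =
      x ^ (2 * (r : ℝ) + (ν / k - 1)) / (2:ℝ) ^ (2 * (r : ℝ) + (ν / k - 1)) :=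
    Real.div_rpow hx.le (by norm_num) _
  have e2 : x ^ (2 * (r : ℝ) + ν / k + ν / k - 1) =
      x ^ (ν / k) * x ^ (2 * (r : ℝ) + (ν / k - 1)) := by
    rw [← Real.rpow_add hx]; congr 1; ring
  have e3 : (2:ℝ) ^ (2 * (r : ℝ) + (ν / k - 1)) = (2:ℝ) ^ (2 * (r : ℝ) + ν / k) / 2 := by
    rw [show 2 * (r : ℝ) + (ν / k - 1) = (2 * (r : ℝ) + ν / k) + (-1) by ring,
      Real.rpow_add (by norm_num : (0:ℝ) < 2), Real.rpow_neg_one]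
    ring
  rw [hG, e1, e2, e3]
  have hGne : kGamma k ((r : ℝ) * k + ν) ≠ 0 := (kGamma_pos hk hpos2).ne'
  have hf : ((r.factorial : ℝ)) ≠ 0 := by positivity
  have hT : (2:ℝ) ^ (2 * (r : ℝ) + ν / k) ≠ 0 := (rpow_pos_of_pos (by norm_num) _).ne'
  have hm : (r : ℝ) * k + ν ≠ 0 := hpos2.ne'
  field_simp
  ring

lemma kbG'_bound {k ν c x : ℝ} (hk : 0 < k) (hν : 0 < ν) (hx : 0 < x) (r : ℕ)
    {y : ℝ} (hy : y ∈ Set.Ioo (x / 2) (x + 1)) :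
    ‖kbG' k ν c r y‖ ≤ kbU k ν c x r := by
  obtain ⟨hy1, hy2⟩ := hy
  have hy0 : 0 < y := lt_trans (by linarith) hy1
  have he : 0 < ν / k := div_pos hν hk
  have hp : 0 < 2 * (r : ℝ) + ν / k + ν / k := by positivity
  unfold kbG' kbU kbD
  have hsplit : y ^ (2 * (r : ℝ) + ν / k + ν / k - 1) =
      y ^ (2 * (r : ℝ)) * y ^ (ν / k + ν / k - 1) := by
    rw [← Real.rpow_add hy0]; congr 1; ring
  rw [Real.norm_eq_abs, abs_mul, abs_div, abs_mul, hsplit,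
    abs_of_pos (rpow_pos_of_pos (by norm_num : (0:ℝ) < 2) _), abs_of_pos hp,
    abs_of_pos (mul_pos (rpow_pos_of_pos hy0 _) (rpow_pos_of_pos hy0 _))]
  have h1 : y ^ (2 * (r : ℝ)) ≤ (x + 1) ^ (2 * (r : ℝ)) :=
    Real.rpow_le_rpow hy0.le (by linarith) (by positivity)
  have h2 : y ^ (ν / k + ν / k - 1) ≤ kbC k ν x := by
    rcases le_or_gt 0 (ν / k + ν / k - 1) with hd | hd
    · exact le_trans (Real.rpow_le_rpow hy0.le (by linarith) hd) (le_max_right _ _)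
    · exact le_trans (Real.rpow_le_rpow_of_nonpos (by linarith) hy1.le hd.le)
        (le_max_left _ _)
  calc |kbA k ν c r| / (2:ℝ) ^ (2 * (r : ℝ) + ν / k) *
        ((2 * (r : ℝ) + ν / k + ν / k) * (y ^ (2 * (r : ℝ)) * y ^ (ν / k + ν / k - 1)))
      ≤ |kbA k ν c r| / (2:ℝ) ^ (2 * (r : ℝ) + ν / k) *
        ((2 * (r : ℝ) + ν / k + ν / k) * ((x + 1) ^ (2 * (r : ℝ)) * kbC k ν x)) := by
        gcongr
    _ = (2 * (r : ℝ) + ν / k + ν / k) *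
        (|kbA k ν c r| / (2:ℝ) ^ (2 * (r : ℝ) + ν / k) *
          ((x + 1) ^ (2 * (r : ℝ)) * kbC k ν x)) := by ring

lemma rpow_two_eq (a : ℝ) : a ^ (2:ℝ) = a * a := by
  rw [show (2:ℝ) = ((2:ℕ):ℝ) by norm_num, Real.rpow_natCast]; ring

lemma kbU_nonneg {k ν c x : ℝ} (hk : 0 < k) (hν : 0 < ν) (hx : 0 < x) (r : ℕ) :
    0 ≤ kbU k ν c x r := by
  have he : 0 < ν / k := div_pos hν hk
  have hC := (kbC_pos (k := k) (ν := ν) hx).le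
  unfold kbU kbD
  positivity

lemma kbU_succ {k ν c x : ℝ} (hk : 0 < k) (hν : 0 < ν) (hx : 0 < x) (r : ℕ) :
    kbU k ν c x (r + 1) = kbD k ν c x r *
      ((2 * (r : ℝ) + 2 + ν / k + ν / k) * (|c| * (x + 1) ^ (2:ℝ)) /
        (4 * (((r : ℝ) * k + ν + k) * ((r : ℝ) + 1)))) := by
  unfold kbU kbD
  rw [abs_kbA_succ hk hν r]
  push_cast
  have hT : (2:ℝ) ^ (2 * ((r : ℝ) + 1) + ν / k) = (2:ℝ) ^ (2 * (r : ℝ) + ν / k) * 4 := by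
    rw [show 2 * ((r : ℝ) + 1) + ν / k = (2 * (r : ℝ) + ν / k) + 2 by ring,
      Real.rpow_add (by norm_num : (0:ℝ) < 2), rpow_two_eq 2]
    norm_num
  have hX : (x + 1) ^ (2 * ((r : ℝ) + 1)) = (x + 1) ^ (2 * (r : ℝ)) * (x + 1) ^ (2:ℝ) := by
    rw [← Real.rpow_add (by linarith)]; congr 1; ring
  rw [hT, hX]
  have h1 : ((r : ℝ) * k + ν + k) ≠ 0 := (kbArg_pos hk hν r).ne'
  have h2 : ((r : ℝ) + 1) ≠ 0 := by positivity
  have h3 : (2:ℝ) ^ (2 * (r : ℝ) + ν / k) ≠ 0 := (rpow_pos_of_pos (by norm_num) _).ne'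
  field_simp

theorem kbU_summable {k ν c x : ℝ} (hk : 0 < k) (hν : 0 < ν) (hx : 0 < x) :
    Summable (kbU k ν c x) := by
  have he : 0 < ν / k := div_pos hν hk
  refine summable_of_ratio_norm_eventually_le (r := 1/2) (by norm_num) ?_
  rw [Filter.eventually_atTop]
  refine ⟨max 1 ⌈|c| * (x + 1) ^ (2:ℝ) / k⌉₊, fun r hr => ?_⟩
  have hr1 : (1:ℝ) ≤ (r : ℝ) := by
    exact_mod_cast le_trans (le_max_left _ _) hr
  have hrc : |c| * (x + 1) ^ (2:ℝ) ≤ k * ((r : ℝ) + 1) := by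
    have h1 : |c| * (x + 1) ^ (2:ℝ) / k ≤ (⌈|c| * (x + 1) ^ (2:ℝ) / k⌉₊ : ℝ) := Nat.le_ceil _
    have h2 : ((⌈|c| * (x + 1) ^ (2:ℝ) / k⌉₊ : ℕ) : ℝ) ≤ (r : ℝ) := by
      exact_mod_cast le_trans (le_max_right _ _) hr
    rw [div_le_iff₀ hk] at h1
    nlinarith
  have hD : 0 ≤ kbD k ν c x r := by
    have hC := (kbC_pos (k := k) (ν := ν) hx).le
    unfold kbD; positivity
  have hB : (2 * (r : ℝ) + 2 + ν / k + ν / k) * (|c| * (x + 1) ^ (2:ℝ)) /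
      (4 * (((r : ℝ) * k + ν + k) * ((r : ℝ) + 1)))
      ≤ 1 / 2 * (2 * (r : ℝ) + ν / k + ν / k) := by
    have hm := kbArg_pos hk hν r
    have hrk : (0:ℝ) ≤ (r : ℝ) * k := mul_nonneg (Nat.cast_nonneg r) hk.le
    have hX2 : (0:ℝ) ≤ |c| * (x + 1) ^ (2:ℝ) := by positivity
    rw [div_le_iff₀ (by positivity)]
    calc (2 * (r : ℝ) + 2 + ν / k + ν / k) * (|c| * (x + 1) ^ (2:ℝ))
        ≤ (2 * (2 * (r : ℝ) + ν / k + ν / k)) * (k * ((r : ℝ) + 1)) :=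
          mul_le_mul (by linarith) hrc hX2 (by positivity)
      _ ≤ (2 * (2 * (r : ℝ) + ν / k + ν / k)) * (((r : ℝ) * k + ν + k) * ((r : ℝ) + 1)) :=
          mul_le_mul_of_nonneg_left
            (mul_le_mul_of_nonneg_right (by linarith) (by positivity)) (by positivity)
      _ = 1 / 2 * (2 * (r : ℝ) + ν / k + ν / k) *
            (4 * (((r : ℝ) * k + ν + k) * ((r : ℝ) + 1))) := by ring
  rw [Real.norm_eq_abs, Real.norm_eq_abs, abs_of_nonneg (kbU_nonneg hk hν hx _),
    abs_of_nonneg (kbU_nonneg hk hν hx _), kbU_succ hk hν hx r]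
  calc kbD k ν c x r * ((2 * (r : ℝ) + 2 + ν / k + ν / k) * (|c| * (x + 1) ^ (2:ℝ)) /
        (4 * (((r : ℝ) * k + ν + k) * ((r : ℝ) + 1))))
      ≤ kbD k ν c x r * (1 / 2 * (2 * (r : ℝ) + ν / k + ν / k)) :=
        mul_le_mul_of_nonneg_left hB hD
    _ = 1 / 2 * kbU k ν c x r := by unfold kbU; ring

lemma kbG_summable_at {k ν c x : ℝ} (hk : 0 < k) (hν : 0 < ν) (hx : 0 < x) :
    Summable (fun r : ℕ => kbG k ν c r x) := by
  have he : 0 < ν / k := div_pos hν hk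
  have hC : 0 < kbC k ν x := kbC_pos hx
  refine Summable.of_norm_bounded (g :=
    fun r => (x ^ (ν / k + ν / k) / ((ν / k + ν / k) * kbC k ν x)) * kbU k ν c x r)
    ((kbU_summable hk hν hx).mul_left _) fun r => ?_
  unfold kbG kbU kbD
  have hsplit : x ^ (2 * (r : ℝ) + ν / k + ν / k) =
      x ^ (2 * (r : ℝ)) * x ^ (ν / k + ν / k) := by
    rw [← Real.rpow_add hx]; congr 1; ring
  rw [Real.norm_eq_abs, abs_mul, abs_div, hsplit,
    abs_of_pos (rpow_pos_of_pos (by norm_num : (0:ℝ) < 2) _),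
    abs_of_pos (mul_pos (rpow_pos_of_pos hx _) (rpow_pos_of_pos hx _))]
  have h1 : x ^ (2 * (r : ℝ)) ≤ (x + 1) ^ (2 * (r : ℝ)) :=
    Real.rpow_le_rpow hx.le (by linarith) (by positivity)
  have h2e : ν / k + ν / k ≤ 2 * (r : ℝ) + ν / k + ν / k := by
    have : (0:ℝ) ≤ (r : ℝ) := Nat.cast_nonneg r
    linarith
  calc |kbA k ν c r| / (2:ℝ) ^ (2 * (r : ℝ) + ν / k) *
        (x ^ (2 * (r : ℝ)) * x ^ (ν / k + ν / k))
      ≤ |kbA k ν c r| / (2:ℝ) ^ (2 * (r : ℝ) + ν / k) *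
        ((x + 1) ^ (2 * (r : ℝ)) * x ^ (ν / k + ν / k)) := by gcongr
    _ = (x ^ (ν / k + ν / k) / ((ν / k + ν / k) * kbC k ν x)) *
        ((ν / k + ν / k) * (|kbA k ν c r| / (2:ℝ) ^ (2 * (r : ℝ) + ν / k) *
          ((x + 1) ^ (2 * (r : ℝ)) * kbC k ν x))) := by
        field_simp
    _ ≤ (x ^ (ν / k + ν / k) / ((ν / k + ν / k) * kbC k ν x)) *
        ((2 * (r : ℝ) + ν / k + ν / k) * (|kbA k ν c r| / (2:ℝ) ^ (2 * (r : ℝ) + ν / k) *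
          ((x + 1) ^ (2 * (r : ℝ)) * kbC k ν x))) := by gcongr

theorem kBessel_deriv_mul_rpow (k ν c : ℝ) (hk : 0 < k) (hν : 0 < ν) (x : ℝ) (hx : 0 < x) :
    deriv (fun y : ℝ => y ^ (ν / k) * kBesselW k ν c y) x =
      x ^ (ν / k) / k * kBesselW k (ν - k) c x := by
  have he : 0 < ν / k := div_pos hν hk
  have hmem : x ∈ Set.Ioo (x / 2) (x + 1) := ⟨by linarith, by linarith⟩
  have hder : HasDerivAt (fun z : ℝ => ∑' r : ℕ, kbG k ν c r z)
      (∑' r : ℕ, kbG' k ν c r x) x :=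
    hasDerivAt_tsum_of_isPreconnected (kbU_summable hk hν hx) isOpen_Ioo
      isPreconnected_Ioo
      (fun r y hy => kbG_hasDerivAt r (lt_trans (by linarith) hy.1))
      (fun r y hy => kbG'_bound hk hν hx r hy) hmem (kbG_summable_at hk hν hx) hmem
  have hev : (fun y : ℝ => y ^ (ν / k) * kBesselW k ν c y) =ᶠ[nhds x]
      (fun z : ℝ => ∑' r : ℕ, kbG k ν c r z) := by
    filter_upwards [Ioi_mem_nhds hx] with y hy
    exact kb_eq_tsum hy
  rw [hev.deriv_eq, hder.deriv, kbG'_tsum_eq hk hν hx]
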